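/- For a cocycle f ∈ C^n(A, M) (i.e., ∂_M(f) = 0) and z ∈ Z_M(A), the element f • z = Σ_{i=1}^n (−1)^{i−1} f •_i z, where (f •_i z)(a_1 ⊗ ⋯ ⊗ a_{n−1}) = f(a_1 ⊗ ⋯ ⊗ a_{i−1} ⊗ z ⊗ a_i ⊗ ⋯ ⊗ a_{n−1}), is again a Hochschild cocycle: ∂_M(f • z) = 0. -/

import Mathlib

set_option linter.unreachableTactic false
set_option linter.unnecessarySeqFocus false
set_option linter.unusedTactic false
set_option linter.unusedSectionVars false
set_option maxHeartbeats 1000000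

/-- The Hochschild differential `∂ : C^n(A,M) → C^{n+1}(A,M)` on cochains, written for
plain functions `(Fin n → A) → M`. -/
def hochschildDiff {A M : Type*} [Ring A] [AddCommGroup M] [Module A M] [Module Aᵐᵒᵖ M]
    (n : ℕ) (f : (Fin n → A) → M) : (Fin (n + 1) → A) → M :=
  fun a =>
    a 0 • f (fun i => a i.succ)
      + ∑ i : Fin n, ((-1 : ℤ) ^ ((i : ℕ) + 1)) • f (Fin.contractNth i.castSucc (· * ·) a)
      + ((-1 : ℤ) ^ (n + 1)) • (MulOpposite.op (a (Fin.last n)) • f (fun i => a i.castSucc))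

section Helpers
set_option linter.unreachableTactic false
set_option linter.unnecessarySeqFocus false
set_option linter.unusedTactic false

variable {α : Type*} {n : ℕ}

lemma ins_apply_lt (j : Fin (n+1)) (x : α) (a : Fin n → α) (k : Fin (n+1))
    (h : (k:ℕ) < j) : Fin.insertNth (α := fun _ => α) j x a k = a ⟨k, by omega⟩ := by
  have hk : (k:ℕ) < n := by omega
  have e : k = j.succAbove ⟨k, hk⟩ := by
    rw [Fin.succAbove_of_castSucc_lt _ _ (by simp only [Fin.lt_def, Fin.coe_castSucc]; exact h)]
    rfl
  conv_lhs => rw [e]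
  rw [Fin.insertNth_apply_succAbove]

lemma ins_apply_eq (j : Fin (n+1)) (x : α) (a : Fin n → α) (k : Fin (n+1))
    (h : (k:ℕ) = j) : Fin.insertNth (α := fun _ => α) j x a k = x := by
  have : k = j := Fin.ext h
  rw [this, Fin.insertNth_apply_same]

lemma ins_apply_gt (j : Fin (n+1)) (x : α) (a : Fin n → α) (k : Fin (n+1))
    (h : (j:ℕ) < k) : Fin.insertNth (α := fun _ => α) j x a k = a ⟨(k:ℕ)-1, by omega⟩ := by
  have hk : (k:ℕ) - 1 < n := by omega
  have e : k = j.succAbove ⟨(k:ℕ)-1, hk⟩ := by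
    rw [Fin.succAbove_of_le_castSucc _ _ (by simp only [Fin.le_def, Fin.coe_castSucc]; omega)]
    ext; simp only [Fin.val_succ]; omega
  conv_lhs => rw [e]
  rw [Fin.insertNth_apply_succAbove]

/-- tail of insert -/
lemma tail_ins (j : Fin (n+1)) (x : α) (b : Fin (n+1) → α) :
    (fun i : Fin (n+1) => Fin.insertNth (α := fun _ => α) j.succ x b i.succ)
      = Fin.insertNth (α := fun _ => α) j x (fun i => b i.succ) := by
  funext k
  rcases lt_trichotomy (k:ℕ) (j:ℕ) with h | h | h
  · rw [ins_apply_lt _ _ _ _ (by simp only [Fin.coe_castSucc, Fin.val_succ]; omega), ins_apply_lt _ _ _ _ h]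
    exact congrArg b (Fin.ext (by simp only [Fin.coe_castSucc, Fin.val_succ, Fin.mk.injEq]))
  · rw [ins_apply_eq _ _ _ _ (by simp only [Fin.coe_castSucc, Fin.val_succ]; omega), ins_apply_eq _ _ _ _ h]
  · rw [ins_apply_gt _ _ _ _ (by simp only [Fin.coe_castSucc, Fin.val_succ]; omega), ins_apply_gt _ _ _ _ h]
    exact congrArg b (Fin.ext (by simp only [Fin.coe_castSucc, Fin.val_succ]; omega))

/-- init of insert -/
lemma init_ins (j : Fin (n+1)) (x : α) (b : Fin (n+1) → α) :
    (fun i : Fin (n+1) => Fin.insertNth (α := fun _ => α) j.castSucc x b i.castSucc)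
      = Fin.insertNth (α := fun _ => α) j x (fun i => b i.castSucc) := by
  funext k
  rcases lt_trichotomy (k:ℕ) (j:ℕ) with h | h | h
  · rw [ins_apply_lt _ _ _ _ (by simp only [Fin.coe_castSucc, Fin.val_succ]; omega), ins_apply_lt _ _ _ _ h]
    exact congrArg b (Fin.ext (by simp only [Fin.coe_castSucc, Fin.val_succ, Fin.mk.injEq]))
  · rw [ins_apply_eq _ _ _ _ (by simp only [Fin.coe_castSucc, Fin.val_succ]; omega), ins_apply_eq _ _ _ _ h]
  · rw [ins_apply_gt _ _ _ _ (by simp only [Fin.coe_castSucc, Fin.val_succ]; omega), ins_apply_gt _ _ _ _ h]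
    exact congrArg b (Fin.ext (by simp only [Fin.coe_castSucc, Fin.val_succ]))

section Contract
variable [Mul α]

/-- contract below insert: `i + 1 < j` -/
lemma contract_ins_lt (c j : Fin (n+2)) (x : α) (a : Fin (n+1) → α)
    (h : (c:ℕ) + 1 < (j:ℕ)) :
    Fin.contractNth c (· * ·) (Fin.insertNth (α := fun _ => α) j x a)
      = Fin.insertNth (α := fun _ => α) (⟨(j:ℕ)-1, by omega⟩ : Fin (n+1)) x
          (Fin.contractNth (⟨(c:ℕ), by omega⟩ : Fin (n+1)) (· * ·) a) := by
  funext k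
  rcases lt_trichotomy (k:ℕ) (c:ℕ) with h1 | h1 | h1
  · rw [Fin.contractNth_apply_of_lt _ _ _ _ h1,
      ins_apply_lt _ _ _ _ (by simp only [Fin.coe_castSucc, Fin.val_succ] <;> omega),
      ins_apply_lt _ _ _ _ (by simp only [] <;> omega),
      Fin.contractNth_apply_of_lt _ _ _ _ (by simp only [] <;> omega)]
    exact congrArg a (Fin.ext (by simp only [Fin.coe_castSucc, Fin.val_succ, Fin.mk.injEq] <;> omega))
  · rw [Fin.contractNth_apply_of_eq _ _ _ _ h1,
      ins_apply_lt _ _ _ _ (by simp only [Fin.coe_castSucc, Fin.val_succ] <;> omega),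
      ins_apply_lt _ _ _ _ (by simp only [Fin.coe_castSucc, Fin.val_succ] <;> omega),
      ins_apply_lt _ _ _ _ (by simp only [] <;> omega),
      Fin.contractNth_apply_of_eq _ _ _ _ (by simp only [] <;> omega)]
    congr 1 <;>
      exact congrArg a (Fin.ext (by simp only [Fin.coe_castSucc, Fin.val_succ, Fin.mk.injEq] <;> omega))
  · rcases lt_trichotomy (k:ℕ) ((j:ℕ)-1) with h2 | h2 | h2
    · rw [Fin.contractNth_apply_of_gt _ _ _ _ h1,
        ins_apply_lt _ _ _ _ (by simp only [Fin.coe_castSucc, Fin.val_succ] <;> omega),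
        ins_apply_lt _ _ _ _ (by simp only [] <;> omega),
        Fin.contractNth_apply_of_gt _ _ _ _ (by simp only [] <;> omega)]
      exact congrArg a (Fin.ext (by simp only [Fin.coe_castSucc, Fin.val_succ, Fin.mk.injEq] <;> omega))
    · rw [Fin.contractNth_apply_of_gt _ _ _ _ h1,
        ins_apply_eq _ _ _ _ (by simp only [Fin.coe_castSucc, Fin.val_succ] <;> omega),
        ins_apply_eq _ _ _ _ (by simp only [] <;> omega)]
    · rw [Fin.contractNth_apply_of_gt _ _ _ _ h1,
        ins_apply_gt _ _ _ _ (by simp only [Fin.coe_castSucc, Fin.val_succ] <;> omega),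
        ins_apply_gt _ _ _ _ (by simp only [] <;> omega),
        Fin.contractNth_apply_of_gt _ _ _ _ (by simp only [] <;> omega)]
      exact congrArg a (Fin.ext (by simp only [Fin.coe_castSucc, Fin.val_succ, Fin.mk.injEq] <;> omega))
end Contract

section Contract2
variable [Mul α]

/-- contract above insert: `j < c` -/
lemma contract_ins_gt (c j : Fin (n+2)) (x : α) (a : Fin (n+1) → α)
    (h : (j:ℕ) < (c:ℕ)) :
    Fin.contractNth c (· * ·) (Fin.insertNth (α := fun _ => α) j x a)
      = Fin.insertNth (α := fun _ => α) (⟨(j:ℕ), by omega⟩ : Fin (n+1)) x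
          (Fin.contractNth (⟨(c:ℕ)-1, by omega⟩ : Fin (n+1)) (· * ·) a) := by
  funext k
  rcases lt_trichotomy (k:ℕ) (j:ℕ) with h1 | h1 | h1
  · rw [Fin.contractNth_apply_of_lt _ _ _ _ (by omega),
      ins_apply_lt _ _ _ _ (by simp only [Fin.coe_castSucc, Fin.val_succ] <;> omega),
      ins_apply_lt _ _ _ _ (by simp only [] <;> omega),
      Fin.contractNth_apply_of_lt _ _ _ _ (by simp only [] <;> omega)]
    exact congrArg a (Fin.ext (by simp only [Fin.coe_castSucc, Fin.val_succ, Fin.mk.injEq] <;> omega))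
  · rw [Fin.contractNth_apply_of_lt _ _ _ _ (by omega),
      ins_apply_eq _ _ _ _ (by simp only [Fin.coe_castSucc, Fin.val_succ] <;> omega),
      ins_apply_eq _ _ _ _ (by simp only [] <;> omega)]
  · rcases lt_trichotomy (k:ℕ) (c:ℕ) with h2 | h2 | h2
    · rw [Fin.contractNth_apply_of_lt _ _ _ _ h2,
        ins_apply_gt _ _ _ _ (by simp only [Fin.coe_castSucc, Fin.val_succ] <;> omega),
        ins_apply_gt _ _ _ _ (by simp only [] <;> omega),
        Fin.contractNth_apply_of_lt _ _ _ _ (by simp only [] <;> omega)]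
      exact congrArg a (Fin.ext (by simp only [Fin.coe_castSucc, Fin.val_succ, Fin.mk.injEq] <;> omega))
    · rw [Fin.contractNth_apply_of_eq _ _ _ _ h2,
        ins_apply_gt _ _ _ _ (by simp only [Fin.coe_castSucc, Fin.val_succ] <;> omega),
        ins_apply_gt _ _ _ _ (by simp only [Fin.coe_castSucc, Fin.val_succ] <;> omega),
        ins_apply_gt _ _ _ _ (by simp only [] <;> omega),
        Fin.contractNth_apply_of_eq _ _ _ _ (by simp only [] <;> omega)]
      congr 1 <;>
        exact congrArg a (Fin.ext (by simp only [Fin.coe_castSucc, Fin.val_succ, Fin.mk.injEq] <;> omega))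
    · rw [Fin.contractNth_apply_of_gt _ _ _ _ h2,
        ins_apply_gt _ _ _ _ (by simp only [Fin.coe_castSucc, Fin.val_succ] <;> omega),
        ins_apply_gt _ _ _ _ (by simp only [] <;> omega),
        Fin.contractNth_apply_of_gt _ _ _ _ (by simp only [] <;> omega)]
      exact congrArg a (Fin.ext (by simp only [Fin.coe_castSucc, Fin.val_succ, Fin.mk.injEq] <;> omega))

/-- the diagonal cancellation: needs centrality of `x` -/
lemma contract_ins_diag (j : Fin (n+1)) (x : α) (a : Fin (n+1) → α)
    (hx : ∀ w : α, x * w = w * x) :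
    Fin.contractNth j.castSucc (· * ·) (Fin.insertNth (α := fun _ => α) j.succ x a)
      = Fin.contractNth j.castSucc (· * ·) (Fin.insertNth (α := fun _ => α) j.castSucc x a) := by
  funext k
  rcases lt_trichotomy (k:ℕ) (j:ℕ) with h1 | h1 | h1
  · rw [Fin.contractNth_apply_of_lt _ _ _ _ (by simp only [Fin.coe_castSucc] <;> omega),
      Fin.contractNth_apply_of_lt _ _ _ _ (by simp only [Fin.coe_castSucc] <;> omega),
      ins_apply_lt _ _ _ _ (by simp only [Fin.coe_castSucc, Fin.val_succ] <;> omega),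
      ins_apply_lt _ _ _ _ (by simp only [Fin.coe_castSucc, Fin.val_succ] <;> omega)]
  · rw [Fin.contractNth_apply_of_eq _ _ _ _ (by simp only [Fin.coe_castSucc] <;> omega),
      Fin.contractNth_apply_of_eq _ _ _ _ (by simp only [Fin.coe_castSucc] <;> omega),
      ins_apply_lt _ _ _ _ (by simp only [Fin.coe_castSucc, Fin.val_succ] <;> omega),
      ins_apply_eq _ _ _ _ (by simp only [Fin.coe_castSucc, Fin.val_succ] <;> omega),
      ins_apply_eq _ _ _ _ (by simp only [Fin.coe_castSucc, Fin.val_succ] <;> omega),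
      ins_apply_gt _ _ _ _ (by simp only [Fin.coe_castSucc, Fin.val_succ] <;> omega),
      ← hx]
    exact congrArg (fun t => x * a t) (Fin.ext (by simp only [Fin.coe_castSucc, Fin.val_succ, Fin.mk.injEq] <;> omega))
  · rw [Fin.contractNth_apply_of_gt _ _ _ _ (by simp only [Fin.coe_castSucc] <;> omega),
      Fin.contractNth_apply_of_gt _ _ _ _ (by simp only [Fin.coe_castSucc] <;> omega),
      ins_apply_gt _ _ _ _ (by simp only [Fin.coe_castSucc, Fin.val_succ] <;> omega),
      ins_apply_gt _ _ _ _ (by simp only [Fin.coe_castSucc, Fin.val_succ] <;> omega)]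
end Contract2


open Finset in
lemma double_reindex {M : Type*} [AddCommGroup M] (n : ℕ) (F G : ℕ → ℕ → M)
    (h1 : ∀ i j, i + 1 < j → j < n + 2 → F i j = G i (j - 1))
    (h2 : ∀ i j, j < i → i < n + 1 → F i j = G (i - 1) j)
    (h3 : ∀ k, k < n + 1 → F k k + F k (k + 1) = 0) :
    ∑ j ∈ Finset.range (n + 2), ∑ i ∈ Finset.range (n + 1), F i j
      = ∑ p ∈ Finset.range n, ∑ q ∈ Finset.range (n + 1), G p q := by
  rw [Finset.sum_comm]
  have key : ∀ i ∈ Finset.range (n + 1), ∑ j ∈ Finset.range (n + 2), F i j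
      = (∑ j ∈ Finset.range i, G (i - 1) j) + ∑ q ∈ Finset.Ico (i + 1) (n + 1), G i q := by
    intro i hi
    rw [Finset.mem_range] at hi
    have hsplit : ∑ j ∈ Finset.range (n + 2), F i j
        = (∑ j ∈ Finset.range i, F i j) + ∑ j ∈ Finset.Ico i (n + 2), F i j := by
      rw [Finset.range_eq_Ico, ← Finset.sum_Ico_consecutive _ (Nat.zero_le i) (by omega),
        ← Finset.range_eq_Ico]
    rw [hsplit, Finset.sum_eq_sum_Ico_succ_bot (by omega),
      Finset.sum_eq_sum_Ico_succ_bot (by omega)]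
    have hdiag : F i i + (F i (i + 1) + ∑ j ∈ Finset.Ico (i + 1 + 1) (n + 2), F i j)
        = ∑ j ∈ Finset.Ico (i + 2) (n + 2), F i j := by
      rw [← add_assoc, h3 i hi, zero_add]
    rw [← add_assoc, add_assoc (∑ j ∈ Finset.range i, F i j), hdiag]
    congr 1
    · exact Finset.sum_congr rfl fun j hj => h2 i j (Finset.mem_range.mp hj) hi
    · rw [Finset.sum_Ico_eq_sum_range, Finset.sum_Ico_eq_sum_range]
      have hlen : n + 2 - (i + 2) = n + 1 - (i + 1) := by omega
      rw [hlen]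
      refine Finset.sum_congr rfl fun t ht => ?_
      rw [Finset.mem_range] at ht
      rw [h1 i (i + 2 + t) (by omega) (by omega)]
      congr 1
      omega
  rw [Finset.sum_congr rfl key, Finset.sum_add_distrib]
  have e1 : ∑ i ∈ Finset.range (n + 1), ∑ j ∈ Finset.range i, G (i - 1) j
      = ∑ p ∈ Finset.range n, ∑ j ∈ Finset.range (p + 1), G p j := by
    rw [Finset.sum_range_succ']
    simp
  have e2 : ∑ i ∈ Finset.range (n + 1), ∑ q ∈ Finset.Ico (i + 1) (n + 1), G i q
      = ∑ p ∈ Finset.range n, ∑ q ∈ Finset.Ico (p + 1) (n + 1), G p q := by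
    rw [Finset.sum_range_succ]
    simp
  rw [e1, e2, ← Finset.sum_add_distrib]
  refine Finset.sum_congr rfl fun p hp => ?_
  rw [Finset.mem_range] at hp
  rw [Finset.range_eq_Ico, Finset.sum_Ico_consecutive _ (Nat.zero_le _) (by omega),
    ← Finset.range_eq_Ico]

section Claims
variable {A M : Type*} [Ring A] [AddCommGroup M] [Module A M] [Module Aᵐᵒᵖ M]

lemma claimX (n : ℕ) (φ : (Fin (n+1) → A) → M) (z : A) (a : Fin (n+1) → A) :
    ∑ j : Fin (n+2), ((-1:ℤ)^(j:ℕ)) •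
        ((Fin.insertNth (α := fun _ => A) j z a 0) • φ (fun i => Fin.insertNth (α := fun _ => A) j z a i.succ))
      = z • φ a
        - a 0 • (∑ q : Fin (n+1), ((-1:ℤ)^(q:ℕ)) • φ (Fin.insertNth (α := fun _ => A) q z (fun i => a i.succ))) := by
  rw [Fin.sum_univ_succ]
  have t0 : (fun i : Fin (n+1) => Fin.insertNth (α := fun _ => A) (0 : Fin (n+2)) z a i.succ)
      = a := by
    funext i
    rw [ins_apply_gt _ _ _ _ (by simp)]
    exact congrArg a (Fin.ext (by simp))
  have t0' : Fin.insertNth (α := fun _ => A) (0 : Fin (n+2)) z a 0 = z :=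
    ins_apply_eq _ _ _ _ (by simp)
  rw [t0, t0']
  have tsucc : ∀ k : Fin (n+1),
      ((-1:ℤ)^((k.succ : Fin (n+2)):ℕ)) •
        ((Fin.insertNth (α := fun _ => A) k.succ z a 0) • φ (fun i => Fin.insertNth (α := fun _ => A) k.succ z a i.succ))
      = -(a 0 • (((-1:ℤ)^(k:ℕ)) • φ (Fin.insertNth (α := fun _ => A) k z (fun i => a i.succ)))) := by
    intro k
    rw [tail_ins, ins_apply_lt _ _ _ _ (by simp)]
    have h0 : (⟨((0 : Fin (n+2)):ℕ), by simp⟩ : Fin (n+1)) = 0 := by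
      ext; simp
    rw [h0, Fin.val_succ, pow_succ, mul_smul, neg_one_zsmul, smul_neg, smul_comm]
  rw [Finset.sum_congr rfl (fun k _ => tsucc k), Finset.sum_neg_distrib, ← Finset.smul_sum]
  simp [sub_eq_add_neg]


end Claims

section ClaimW
variable {A M : Type*} [Ring A] [AddCommGroup M] [Module A M] [Module Aᵐᵒᵖ M]

lemma claimW (n : ℕ) (φ : (Fin (n+1) → A) → M) (z : A) (a : Fin (n+1) → A) :
    ∑ j : Fin (n+2), ((-1:ℤ)^(j:ℕ)) • (((-1:ℤ)^(n+1+1)) •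
        (MulOpposite.op (Fin.insertNth (α := fun _ => A) j z a (Fin.last (n+1))) •
          φ (fun i => Fin.insertNth (α := fun _ => A) j z a i.castSucc)))
      = - (MulOpposite.op z • φ a)
        - ((-1:ℤ)^(n+1)) • (MulOpposite.op (a (Fin.last n)) •
            ∑ q : Fin (n+1), ((-1:ℤ)^(q:ℕ)) •
              φ (Fin.insertNth (α := fun _ => A) q z (fun i => a i.castSucc))) := by
  rw [Fin.sum_univ_castSucc]
  have tL : (fun i : Fin (n+1) =>
      Fin.insertNth (α := fun _ => A) (Fin.last (n+1)) z a i.castSucc) = a := by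
    funext i
    rw [ins_apply_lt _ _ _ _ (by simp [Fin.lt_def]; exact Nat.le_of_lt_succ i.isLt)]
    exact congrArg a (Fin.ext (by simp))
  have tL' : Fin.insertNth (α := fun _ => A) (Fin.last (n+1)) z a (Fin.last (n+1)) = z :=
    ins_apply_eq _ _ _ _ rfl
  rw [tL, tL', Fin.val_last, smul_smul]
  have sgn1 : ((-1:ℤ)^(n+1)) * ((-1:ℤ)^(n+1+1)) = -1 := by
    rw [← pow_add]
    exact Odd.neg_one_pow ⟨n + 1, by omega⟩
  rw [sgn1, neg_one_zsmul]
  have tsucc : ∀ k : Fin (n+1),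
      ((-1:ℤ)^((k.castSucc : Fin (n+2)):ℕ)) • (((-1:ℤ)^(n+1+1)) •
        (MulOpposite.op (Fin.insertNth (α := fun _ => A) k.castSucc z a (Fin.last (n+1))) •
          φ (fun i => Fin.insertNth (α := fun _ => A) k.castSucc z a i.castSucc)))
      = -(((-1:ℤ)^(n+1)) • (MulOpposite.op (a (Fin.last n)) •
          (((-1:ℤ)^(k:ℕ)) • φ (Fin.insertNth (α := fun _ => A) k z (fun i => a i.castSucc))))) := by
    intro k
    rw [init_ins, ins_apply_gt _ _ _ _ (by simp [Fin.lt_def]; exact Nat.le_of_lt_succ k.isLt)]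
    rw [show (⟨((Fin.last (n+1)):ℕ)-1, by simp⟩ : Fin (n+1)) = Fin.last n from Fin.ext (by simp)]
    rw [smul_smul, smul_comm (MulOpposite.op (a (Fin.last n))) ((-1:ℤ)^(k:ℕ)), smul_smul,
      ← neg_smul]
    congr 1
    rw [Fin.coe_castSucc, pow_succ]
    ring
  rw [Finset.sum_congr rfl (fun k _ => tsucc k), Finset.sum_neg_distrib, ← Finset.smul_sum,
    ← Finset.smul_sum]
  abel
end ClaimW
section ClaimY
variable {A M : Type*} [Ring A] [AddCommGroup M] [Module A M] [Module Aᵐᵒᵖ M]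

lemma claimY (n : ℕ) (φ : (Fin (n+1) → A) → M) (z : A) (a : Fin (n+1) → A)
    (hzc : ∀ w : A, z * w = w * z) :
    ∑ j : Fin (n+2), ((-1:ℤ)^(j:ℕ)) •
        (∑ i : Fin (n+1), ((-1:ℤ)^((i:ℕ)+1)) •
          φ (Fin.contractNth i.castSucc (· * ·) (Fin.insertNth (α := fun _ => A) j z a)))
      = - ∑ p : Fin n, ((-1:ℤ)^((p:ℕ)+1)) •
          (∑ q : Fin (n+1), ((-1:ℤ)^(q:ℕ)) •
            φ (Fin.insertNth (α := fun _ => A) q z (Fin.contractNth p.castSucc (· * ·) a))) := by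
  set F : ℕ → ℕ → M := fun i j =>
    if h : i < n+1 ∧ j < n+2 then
      ((-1:ℤ)^(i+j+1)) • φ (Fin.contractNth (Fin.castSucc (⟨i, h.1⟩ : Fin (n+1))) (· * ·)
        (Fin.insertNth (α := fun _ => A) (⟨j, h.2⟩ : Fin (n+2)) z a))
    else 0 with hF
  set G : ℕ → ℕ → M := fun p q =>
    if h : p < n ∧ q < n+1 then
      ((-1:ℤ)^(p+q)) • φ (Fin.insertNth (α := fun _ => A) (⟨q, h.2⟩ : Fin (n+1)) z
        (Fin.contractNth (Fin.castSucc (⟨p, h.1⟩ : Fin n)) (· * ·) a))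
    else 0 with hG
  have hL : ∑ j : Fin (n+2), ((-1:ℤ)^(j:ℕ)) •
        (∑ i : Fin (n+1), ((-1:ℤ)^((i:ℕ)+1)) •
          φ (Fin.contractNth i.castSucc (· * ·) (Fin.insertNth (α := fun _ => A) j z a)))
      = ∑ j ∈ Finset.range (n+2), ∑ i ∈ Finset.range (n+1), F i j := by
    rw [← Fin.sum_univ_eq_sum_range (fun j => ∑ i ∈ Finset.range (n+1), F i j) (n+2)]
    refine Finset.sum_congr rfl fun j _ => ?_
    rw [Finset.smul_sum, ← Fin.sum_univ_eq_sum_range (fun i => F (i:ℕ) (j:ℕ)) (n+1)]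
    refine Finset.sum_congr rfl fun i _ => ?_
    rw [hF]
    dsimp only
    rw [dif_pos ⟨i.isLt, j.isLt⟩, smul_smul, ← pow_add,
      show (j:ℕ) + ((i:ℕ)+1) = (i:ℕ) + (j:ℕ) + 1 from by omega]
  have hR : ∑ p ∈ Finset.range n, ∑ q ∈ Finset.range (n+1), G p q
      = - ∑ p : Fin n, ((-1:ℤ)^((p:ℕ)+1)) •
          (∑ q : Fin (n+1), ((-1:ℤ)^(q:ℕ)) •
            φ (Fin.insertNth (α := fun _ => A) q z (Fin.contractNth p.castSucc (· * ·) a))) := by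
    rw [← Finset.sum_neg_distrib, ← Fin.sum_univ_eq_sum_range
      (fun p => ∑ q ∈ Finset.range (n+1), G p q) n]
    refine Finset.sum_congr rfl fun p _ => ?_
    rw [← neg_smul, Finset.smul_sum, ← Fin.sum_univ_eq_sum_range (fun q => G (p:ℕ) q) (n+1)]
    refine Finset.sum_congr rfl fun q _ => ?_
    rw [hG]
    dsimp only
    rw [dif_pos ⟨p.isLt, q.isLt⟩, smul_smul,
      show -(-1:ℤ)^((p:ℕ)+1) * (-1:ℤ)^(q:ℕ) = ((-1:ℤ))^((p:ℕ)+(q:ℕ)) from by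
        rw [pow_succ, pow_add]; ring]
  have h1 : ∀ i j, i + 1 < j → j < n + 2 → F i j = G i (j - 1) := by
    intro i j hij hj
    rw [hF, hG]
    dsimp only
    rw [dif_pos ⟨by omega, by omega⟩, dif_pos ⟨by omega, by omega⟩,
      show ((-1:ℤ)^(i+j+1)) = ((-1:ℤ)^(i+(j-1))) from by
        rw [show i+j+1 = (i+(j-1))+2 from by omega, pow_add]; norm_num,
      contract_ins_lt (Fin.castSucc (⟨i, by omega⟩ : Fin (n+1))) (⟨j, hj⟩ : Fin (n+2)) z a
        (by simpa using hij)]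
    rfl
  have h2 : ∀ i j, j < i → i < n + 1 → F i j = G (i - 1) j := by
    intro i j hji hi
    rw [hF, hG]
    dsimp only
    rw [dif_pos ⟨hi, by omega⟩, dif_pos ⟨by omega, by omega⟩,
      show ((-1:ℤ)^(i+j+1)) = ((-1:ℤ)^((i-1)+j)) from by
        rw [show i+j+1 = ((i-1)+j)+2 from by omega, pow_add]; norm_num,
      contract_ins_gt (Fin.castSucc (⟨i, hi⟩ : Fin (n+1))) (⟨j, by omega⟩ : Fin (n+2)) z a
        (by simpa using hji)]
    rfl
  have h3 : ∀ k, k < n + 1 → F k k + F k (k + 1) = 0 := by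
    intro k hk
    rw [hF]
    dsimp only
    rw [dif_pos ⟨hk, by omega⟩, dif_pos ⟨hk, by omega⟩,
      show (⟨k+1, by omega⟩ : Fin (n+2)) = Fin.succ (⟨k, hk⟩ : Fin (n+1)) from rfl,
      show (⟨k, by omega⟩ : Fin (n+2)) = Fin.castSucc (⟨k, hk⟩ : Fin (n+1)) from rfl,
      contract_ins_diag (⟨k, hk⟩ : Fin (n+1)) z a hzc,
      Odd.neg_one_pow (Nat.odd_iff.mpr (by omega)),
      Even.neg_one_pow (Nat.even_iff.mpr (by omega)),
      one_smul, neg_one_zsmul, neg_add_cancel]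
  exact hL.trans ((double_reindex n F G h1 h2 h3).trans hR)


end ClaimY
end Helpers

theorem cocycle_bullet_central_element_is_cocycle
    (K A M : Type*) [CommRing K] [Ring A] [Algebra K A]
    [AddCommGroup M] [Module K M] [Module A M] [Module Aᵐᵒᵖ M] [SMulCommClass A Aᵐᵒᵖ M]
    (n : ℕ) (f : MultilinearMap K (fun _ : Fin (n + 1) => A) M)
    (z : A) (hz : z ∈ Set.center A) (hzM : ∀ m : M, z • m = MulOpposite.op z • m)
    (hf : ∀ a : Fin (n + 2) → A, hochschildDiff (n + 1) (⇑f) a = 0) :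
    ∀ a : Fin (n + 1) → A,
      hochschildDiff n
        (fun v => ∑ i : Fin (n + 1), ((-1 : ℤ) ^ (i : ℕ)) • f (Fin.insertNth i z v)) a = 0 := by
  intro a
  have hzc : ∀ w : A, z * w = w * z := fun w => hz.comm w
  have hful : ∑ j : Fin (n+2), ((-1:ℤ)^(j:ℕ)) •
      hochschildDiff (n+1) (⇑f) (Fin.insertNth j z a) = 0 := by
    simp [hf]
  have hexp : ∑ j : Fin (n+2), ((-1:ℤ)^(j:ℕ)) •
        hochschildDiff (n+1) (⇑f) (Fin.insertNth j z a)
      = (∑ j : Fin (n+2), ((-1:ℤ)^(j:ℕ)) •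
          ((Fin.insertNth (α := fun _ => A) j z a 0) •
            f (fun i => Fin.insertNth (α := fun _ => A) j z a i.succ)))
        + (∑ j : Fin (n+2), ((-1:ℤ)^(j:ℕ)) •
            (∑ i : Fin (n+1), ((-1:ℤ)^((i:ℕ)+1)) •
              f (Fin.contractNth i.castSucc (· * ·) (Fin.insertNth (α := fun _ => A) j z a))))
        + (∑ j : Fin (n+2), ((-1:ℤ)^(j:ℕ)) • (((-1:ℤ)^(n+1+1)) •
            (MulOpposite.op (Fin.insertNth (α := fun _ => A) j z a (Fin.last (n+1))) •
              f (fun i => Fin.insertNth (α := fun _ => A) j z a i.castSucc)))) := by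
    rw [← Finset.sum_add_distrib, ← Finset.sum_add_distrib]
    refine Finset.sum_congr rfl fun j _ => ?_
    simp only [hochschildDiff, smul_add]
  have key : ∑ j : Fin (n+2), ((-1:ℤ)^(j:ℕ)) •
        hochschildDiff (n+1) (⇑f) (Fin.insertNth j z a)
      = - ((a 0 • ∑ q : Fin (n+1), ((-1:ℤ)^(q:ℕ)) •
              f (Fin.insertNth (α := fun _ => A) q z (fun i => a i.succ)))
          + (∑ p : Fin n, ((-1:ℤ)^((p:ℕ)+1)) •
              (∑ q : Fin (n+1), ((-1:ℤ)^(q:ℕ)) •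
                f (Fin.insertNth (α := fun _ => A) q z (Fin.contractNth p.castSucc (· * ·) a))))
          + ((-1:ℤ)^(n+1)) • (MulOpposite.op (a (Fin.last n)) •
              ∑ q : Fin (n+1), ((-1:ℤ)^(q:ℕ)) •
                f (Fin.insertNth (α := fun _ => A) q z (fun i => a i.castSucc)))) := by
    rw [hexp, claimX n (⇑f) z a, claimY n (⇑f) z a hzc, claimW n (⇑f) z a, hzM (f a)]
    abel
  have final := neg_eq_zero.mp (key.symm.trans hful)
  simp only [hochschildDiff]
  exact final
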